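/- Let r > 0 and α > 0 with 0 < rα < 2, and let ρ(x) = r 2^(r−1) (1−x)^(r−1) on (1/2, 1]. Then the weighted mean maximum square displacement ⟨Δx²_n⟩_ρ = 2 ∫_{1/2}^1 min(m̄_α(x), n)² ρ(x) dx is asymptotic to (2^(r+1)/(2−rα)) n^(2−rα) as n → ∞. -/

import Mathlib

open Filter Topology MeasureTheory intervalIntegral
set_option autoImplicit false

/-- ℓ⁺_m(α) = 1 - (m + 2^(1/α))^(-α) -/
noncomputable def ellp (α : ℝ) (m : ℕ) : ℝ := 1 - ((m : ℝ) + (2 : ℝ) ^ (1/α)) ^ (-α)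

/-- m̄_α(x) = min { m ∈ ℕ : ℓ⁺_m(α) ≥ x } -/
noncomputable def mbar (α x : ℝ) : ℕ := sInf {m : ℕ | x ≤ ellp α m}

/-- The density ρ(x) = r 2^(r-1) (1-x)^(r-1) on (1/2, 1]. -/
noncomputable def rho (r x : ℝ) : ℝ := r * (2 : ℝ) ^ (r - 1) * (1 - x) ^ (r - 1)

section lemmas
variable {α r : ℝ} (hα : 0 < α) (hr : 0 < r)
include hα

omit hα in
lemma hc : (0:ℝ) < (2:ℝ) ^ (1/α) := Real.rpow_pos_of_pos two_pos _

omit hα in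
lemma base_pos (m : ℕ) : (0:ℝ) < (m : ℝ) + (2:ℝ) ^ (1/α) := by
  have := hc (α := α); positivity

omit hα in
lemma ellp_lt_one (m : ℕ) : ellp α m < 1 := by
  have := Real.rpow_pos_of_pos (base_pos (α := α) m) (-α)
  unfold ellp; linarith

lemma ellp_mono : Monotone (ellp α) := by
  intro m n hmn
  unfold ellp
  have h1 : ((n:ℝ) + (2:ℝ)^(1/α)) ^ (-α) ≤ ((m:ℝ) + (2:ℝ)^(1/α)) ^ (-α) :=
    Real.rpow_le_rpow_of_nonpos (base_pos m) (by exact_mod_cast add_le_add_left (Nat.cast_le.2 hmn) _) (by linarith)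
  linarith

lemma ellp_zero : ellp α 0 = 1/2 := by
  unfold ellp
  rw [Nat.cast_zero, zero_add, ← Real.rpow_mul (by norm_num)]
  rw [one_div, show α⁻¹ * -α = -1 by field_simp]
  rw [Real.rpow_neg_one]
  norm_num

lemma half_le_ellp (m : ℕ) : 1/2 ≤ ellp α m := by
  rw [← ellp_zero hα]; exact ellp_mono hα (Nat.zero_le m)

omit hα in
lemma one_sub_ellp (m : ℕ) : 1 - ellp α m = ((m:ℝ) + (2:ℝ)^(1/α)) ^ (-α) := by
  unfold ellp; ring

omit hα in
lemma mbar_le {x : ℝ} {n : ℕ} (h : x ≤ ellp α n) : mbar α x ≤ n := Nat.sInf_le h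

lemma S_nonempty {x : ℝ} (hx : x < 1) : {m : ℕ | x ≤ ellp α m}.Nonempty := by
  rcases le_or_gt x (1/2) with h | h
  · exact ⟨0, le_trans h (half_le_ellp hα 0)⟩
  · set y := (1 - x) ^ (-(1/α)) with hy
    refine ⟨⌈y⌉₊, ?_⟩
    have h1x : 0 < 1 - x := by linarith
    have hy0 : 0 < y := Real.rpow_pos_of_pos h1x _
    have hle : y ≤ (⌈y⌉₊ : ℝ) + (2:ℝ)^(1/α) := le_trans (Nat.le_ceil y) (by have := hc (α := α); linarith)
    have : ((⌈y⌉₊ : ℝ) + (2:ℝ)^(1/α)) ^ (-α) ≤ y ^ (-α) :=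
      Real.rpow_le_rpow_of_nonpos hy0 hle (by linarith)
    have hyα : y ^ (-α) = 1 - x := by
      rw [hy, ← Real.rpow_mul h1x.le]
      rw [show -(1/α) * -α = 1 by field_simp]
      exact Real.rpow_one _
    simp only [Set.mem_setOf_eq]
    unfold ellp
    rw [hyα] at this
    linarith

lemma mbar_gt {x : ℝ} {n : ℕ} (hx : x < 1) (h : ellp α n < x) : n < mbar α x := by
  by_contra hle
  push_neg at hle
  have hmem := Nat.sInf_mem (S_nonempty hα hx)
  have : x ≤ ellp α n := le_trans hmem (ellp_mono hα hle)
  linarith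

lemma mbar_measurable : Measurable (mbar α) := by
  apply measurable_to_countable'
  intro k
  match k with
  | 0 =>
    have : mbar α ⁻¹' {0} = Set.Iic (ellp α 0) ∪ Set.Ici 1 := by
      ext x
      simp only [Set.mem_preimage, Set.mem_singleton_iff, Set.mem_union, Set.mem_Iic, Set.mem_Ici]
      constructor
      · intro h0
        rcases lt_or_ge x 1 with hx | hx
        · left
          have h2 : x ≤ ellp α (mbar α x) := Nat.sInf_mem (S_nonempty hα hx)
          rw [h0] at h2; exact h2
        · right; exact hx
      · rintro (h | h)
        · exact Nat.le_zero.1 (mbar_le h)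
        · have : {m : ℕ | x ≤ ellp α m} = ∅ := by
            ext m; simp only [Set.mem_setOf_eq, Set.mem_empty_iff_false, iff_false, not_le]
            exact lt_of_lt_of_le (ellp_lt_one m) h
          unfold mbar; rw [this, Nat.sInf_empty]
    rw [this]; exact (measurableSet_Iic.union measurableSet_Ici)
  | (k+1) =>
    have : mbar α ⁻¹' {k+1} = Set.Ioc (ellp α k) (ellp α (k+1)) := by
      ext x
      simp only [Set.mem_preimage, Set.mem_singleton_iff, Set.mem_Ioc]
      constructor
      · intro h0
        have hne : {m : ℕ | x ≤ ellp α m}.Nonempty := by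
          by_contra hcon
          rw [Set.not_nonempty_iff_eq_empty] at hcon
          unfold mbar at h0; rw [hcon, Nat.sInf_empty] at h0; omega
        have hmem := Nat.sInf_mem hne
        constructor
        · by_contra hcon
          push_neg at hcon
          have := mbar_le hcon
          omega
        · rw [show k + 1 = mbar α x from h0.symm] at *; exact hmem
      · rintro ⟨h1, h2⟩
        have hx1 : x < 1 := lt_of_le_of_lt h2 (ellp_lt_one _)
        have := mbar_gt hα hx1 h1
        have := mbar_le h2
        omega
    rw [this]; exact measurableSet_Ioc

end lemmas

section part2
variable {α r : ℝ} (hα : 0 < α) (hr : 0 < r)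

include hr in
omit hα in
lemma rho_intervalIntegrable (a b : ℝ) : IntervalIntegrable (rho r) volume a b := by
  have h1 : IntervalIntegrable (fun t : ℝ => t ^ (r-1)) volume (1-a) (1-b) :=
    intervalIntegral.intervalIntegrable_rpow' (by linarith)
  have h2 := h1.comp_sub_left 1
  simp only [sub_sub_cancel] at h2
  have h3 := h2.const_mul (r * (2:ℝ)^(r-1))
  exact h3

include hr in
omit hα in
lemma integral_rho (a b : ℝ) :
    ∫ x in a..b, rho r x = (2:ℝ)^(r-1) * ((1-a)^r - (1-b)^r) := by
  have h1 : ∫ x in a..b, rho r x = (r * (2:ℝ)^(r-1)) * ∫ x in a..b, (1-x) ^ (r-1) := by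
    unfold rho
    rw [← intervalIntegral.integral_const_mul]
  rw [h1, intervalIntegral.integral_comp_sub_left (fun t => t ^ (r-1)) 1]
  rw [integral_rpow (Or.inl (by linarith))]
  have : r - 1 + 1 = r := by ring
  rw [this]
  field_simp

include hr in
omit hα in
lemma rho_nonneg {x : ℝ} (hx : x ≤ 1) : 0 ≤ rho r x := by
  unfold rho
  have : (0:ℝ) ≤ (1 - x) ^ (r-1) := Real.rpow_nonneg (by linarith) _
  positivity

include hr hα in
omit hα hr in
lemma rho_measurable : Measurable (rho r) := by
  have h1 : Measurable (fun y : ℝ => y ^ (r-1)) := by measurability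
  have h2 : Measurable (fun x : ℝ => 1 - x) := measurable_const.sub measurable_id
  exact measurable_const.mul (h1.comp h2)

include hr hα in
lemma fn_integrable (n : ℕ) (a b : ℝ) (hab : a ≤ b) (hb : b ≤ 1) :
    IntervalIntegrable (fun x => ((min (mbar α x) n : ℕ):ℝ)^2 * rho r x) volume a b := by
  rw [intervalIntegrable_iff_integrableOn_Ioc_of_le hab]
  have hmeas : Measurable (fun x => ((min (mbar α x) n : ℕ):ℝ)^2 * rho r x) := by
    apply Measurable.mul
    · exact (measurable_from_top (f := fun k : ℕ => ((min k n : ℕ):ℝ)^2)).comp (mbar_measurable hα)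
    · exact rho_measurable
  apply MeasureTheory.Integrable.mono'
    (g := fun x => (n:ℝ)^2 * rho r x)
  · exact ((rho_intervalIntegrable hr a b).const_mul ((n:ℝ)^2)).1
  · exact hmeas.aestronglyMeasurable
  · filter_upwards [MeasureTheory.ae_restrict_mem measurableSet_Ioc] with x hx
    have hx1 : x ≤ 1 := le_trans hx.2 hb
    have h0 : 0 ≤ rho r x := rho_nonneg hr hx1
    rw [Real.norm_eq_abs, abs_of_nonneg (by positivity)]
    have : ((min (mbar α x) n : ℕ):ℝ)^2 ≤ (n:ℝ)^2 := by
      have : (min (mbar α x) n : ℕ) ≤ n := min_le_right _ _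
      have h2 : ((min (mbar α x) n : ℕ):ℝ) ≤ (n:ℝ) := by exact_mod_cast this
      have h3 : (0:ℝ) ≤ ((min (mbar α x) n : ℕ):ℝ) := Nat.cast_nonneg _
      nlinarith
    nlinarith

end part2

section part3
variable {α r : ℝ} (hα : 0 < α) (hr : 0 < r)

include hα hr in
lemma integral_formula (n : ℕ) :
    ∫ x in (1/2:ℝ)..1, ((min (mbar α x) n : ℕ):ℝ)^2 * rho r x
      = (2:ℝ)^(r-1) * ∑ k ∈ Finset.range n,
          (2*(k:ℝ)+1) * ((k:ℝ) + (2:ℝ)^(1/α))^(-(r*α)) := by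
  induction n with
  | zero => simp
  | succ n ih =>
    set L := ellp α n with hL
    have hL1 : L < 1 := ellp_lt_one n
    have hLhalf : 1/2 ≤ L := half_le_ellp hα n
    -- splitting
    have hsplit : ∀ m : ℕ,
        ∫ x in (1/2:ℝ)..1, ((min (mbar α x) m : ℕ):ℝ)^2 * rho r x
          = (∫ x in (1/2:ℝ)..L, ((min (mbar α x) m : ℕ):ℝ)^2 * rho r x)
            + ∫ x in L..1, ((min (mbar α x) m : ℕ):ℝ)^2 * rho r x := by
      intro m
      exact (intervalIntegral.integral_add_adjacent_intervals
        (fn_integrable hα hr m (1/2) L hLhalf hL1.le)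
        (fn_integrable hα hr m L 1 hL1.le le_rfl)).symm
    -- on [1/2, L] the integrands for n and n+1 agree
    have e1 : ∫ x in (1/2:ℝ)..L, ((min (mbar α x) (n+1) : ℕ):ℝ)^2 * rho r x
        = ∫ x in (1/2:ℝ)..L, ((min (mbar α x) n : ℕ):ℝ)^2 * rho r x := by
      apply intervalIntegral.integral_congr
      intro x hx
      rw [Set.uIcc_of_le hLhalf] at hx
      have hm : mbar α x ≤ n := mbar_le hx.2
      simp only [min_eq_left hm, min_eq_left (le_trans hm (Nat.le_succ n))]
    -- on (L, 1) the integrand is constant a.e.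
    have e2 : ∀ m : ℕ, m ≤ n+1 → ∫ x in L..1, ((min (mbar α x) m : ℕ):ℝ)^2 * rho r x
        = (m:ℝ)^2 * ((2:ℝ)^(r-1) * ((n:ℝ) + (2:ℝ)^(1/α))^(-(r*α))) := by
      intro m hm
      have hcongr : ∫ x in L..1, ((min (mbar α x) m : ℕ):ℝ)^2 * rho r x
          = ∫ x in L..1, (m:ℝ)^2 * rho r x := by
        apply intervalIntegral.integral_congr_ae
        have h1 : ∀ᵐ x : ℝ, x ∉ ({1} : Set ℝ) :=
          measure_eq_zero_iff_ae_notMem.1 (by simp)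
        filter_upwards [h1] with x hx1 hmem
        rw [Set.uIoc_of_le hL1.le] at hmem
        have hxlt : x < 1 := lt_of_le_of_ne hmem.2 (by simpa using hx1)
        have h2 : n < mbar α x := mbar_gt hα hxlt hmem.1
        have h3 : m ≤ mbar α x := by omega
        rw [min_eq_right h3]
      rw [hcongr, intervalIntegral.integral_const_mul, integral_rho hr]
      rw [one_sub_ellp n, sub_self, Real.zero_rpow hr.ne']
      rw [← Real.rpow_mul (base_pos n).le]
      rw [show -α * r = -(r*α) by ring]
      ring
    have key : (∫ x in (1/2:ℝ)..L, ((min (mbar α x) n : ℕ):ℝ)^2 * rho r x)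
        = (2:ℝ)^(r-1) * (∑ k ∈ Finset.range n,
            (2*(k:ℝ)+1) * ((k:ℝ) + (2:ℝ)^(1/α))^(-(r*α)))
          - (n:ℝ)^2 * ((2:ℝ)^(r-1) * ((n:ℝ) + (2:ℝ)^(1/α))^(-(r*α))) := by
      rw [← ih, hsplit n, e2 n (Nat.le_succ n)]; ring
    rw [hsplit (n+1), e1, key, e2 (n+1) le_rfl, Finset.sum_range_succ]
    push_cast
    ring

end part3

section part4
variable {s cc : ℝ} (hs0 : 0 < s) (hs2 : s < 2) (hcc : 0 < cc)

include hcc in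
lemma limA : Tendsto (fun k : ℕ => ((2*(k:ℝ)+1) * ((k:ℝ)+cc)^(-s)) / (k:ℝ)^((2-s)-1))
    atTop (𝓝 2) := by
  have h1 : Tendsto (fun k : ℕ => (2 + 1/(k:ℝ)) * (1 + cc/(k:ℝ))^(-s)) atTop (𝓝 2) := by
    have ha : Tendsto (fun k : ℕ => 2 + 1/(k:ℝ)) atTop (𝓝 2) := by
      simpa using tendsto_const_nhds.add (tendsto_one_div_atTop_nhds_zero_nat (𝕜 := ℝ))
    have hb : Tendsto (fun k : ℕ => (1 + cc/(k:ℝ))^(-s)) atTop (𝓝 1) := by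
      have hb1 : Tendsto (fun k : ℕ => 1 + cc/(k:ℝ)) atTop (𝓝 1) := by
        simpa using tendsto_const_nhds.add (tendsto_const_div_atTop_nhds_zero_nat cc)
      have hcont : ContinuousAt (fun x : ℝ => x ^ (-s)) 1 :=
        Real.continuousAt_rpow_const 1 (-s) (Or.inl one_ne_zero)
      have := hcont.tendsto.comp hb1
      simpa [Real.one_rpow, Function.comp_def] using this
    simpa using ha.mul hb
  apply h1.congr'
  filter_upwards [eventually_ge_atTop 1] with k hk
  have ht : (0:ℝ) < (k:ℝ) := by exact_mod_cast hk
  have h2 : ((k:ℝ)+cc)^(-s) = (k:ℝ)^(-s) * (1 + cc/(k:ℝ))^(-s) := by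
    rw [← Real.mul_rpow ht.le (by positivity)]
    congr 1
    field_simp
  have h3 : 2*(k:ℝ)+1 = (k:ℝ) * (2 + 1/(k:ℝ)) := by field_simp
  rw [h2, h3]
  have h4 : (k:ℝ) * (k:ℝ)^(-s) = (k:ℝ)^((2-s)-1) := by
    rw [show (2-s)-1 = 1 + -s by ring, Real.rpow_add ht, Real.rpow_one]
  have h5 : ((k:ℝ):ℝ)^((2-s)-1) ≠ 0 := (Real.rpow_pos_of_pos ht _).ne'
  field_simp [← h4]
  rw [← h4]

include hs2 in
lemma limB : Tendsto (fun k : ℕ => (((k:ℝ)+1)^(2-s) - (k:ℝ)^(2-s)) / (k:ℝ)^((2-s)-1))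
    atTop (𝓝 (2-s)) := by
  set p := 2 - s with hp
  have hp0 : 0 < p := by simp [hp]; linarith
  have hd : HasDerivAt (fun x : ℝ => x ^ p) (p * (1:ℝ) ^ (p-1)) 1 :=
    Real.hasDerivAt_rpow_const (Or.inl one_ne_zero)
  rw [Real.one_rpow, mul_one] at hd
  have hslope := hasDerivAt_iff_tendsto_slope.1 hd
  have hcomp : Tendsto (fun k : ℕ => 1 + 1/(k:ℝ)) atTop (𝓝[≠] (1:ℝ)) := by
    rw [tendsto_nhdsWithin_iff]
    constructor
    · simpa using tendsto_const_nhds.add (tendsto_one_div_atTop_nhds_zero_nat (𝕜 := ℝ))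
    · filter_upwards [eventually_ge_atTop 1] with k hk
      have ht : (0:ℝ) < (k:ℝ) := by exact_mod_cast hk
      have : (0:ℝ) < 1/(k:ℝ) := by positivity
      simp only [Set.mem_compl_iff, Set.mem_singleton_iff]
      intro hcon
      nlinarith [hcon]
  have := hslope.comp hcomp
  apply this.congr'
  filter_upwards [eventually_ge_atTop 1] with k hk
  have ht : (0:ℝ) < (k:ℝ) := by exact_mod_cast hk
  have h2 : ((k:ℝ)+1)^p = (k:ℝ)^p * (1 + 1/(k:ℝ))^p := by
    rw [← Real.mul_rpow ht.le (by positivity)]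
    congr 1
    field_simp
  simp only [Function.comp_apply, slope_def_field]
  rw [h2]
  have h4 : (k:ℝ)^p = (k:ℝ) * (k:ℝ)^(p-1) := by
    rw [show p = 1 + (p-1) by ring, Real.rpow_add ht, Real.rpow_one]
    ring_nf
  have h5 : ((k:ℝ))^(p-1) ≠ 0 := by
    rw [show p - 1 = 1 - s by simp [hp]; ring]
    exact (Real.rpow_pos_of_pos ht _).ne'
  rw [Real.one_rpow, h4]
  have hk0 : (k:ℝ) ≠ 0 := ht.ne'
  field_simp
  ring

include hs0 hs2 hcc in
lemma sum_tendsto :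
    Tendsto (fun n : ℕ => (∑ k ∈ Finset.range n, (2*(k:ℝ)+1)*((k:ℝ)+cc)^(-s)) / (n:ℝ)^(2-s))
      atTop (𝓝 (2/(2-s))) := by
  set p := 2 - s with hp
  have hp0 : 0 < p := by simp [hp]; linarith
  set a : ℕ → ℝ := fun k => (2*(k:ℝ)+1)*((k:ℝ)+cc)^(-s) with ha
  set g : ℕ → ℝ := fun k => ((k:ℝ)+1)^p - (k:ℝ)^p with hg
  have hgpos : ∀ k, 0 < g k := fun k =>
    sub_pos.2 (Real.rpow_lt_rpow (Nat.cast_nonneg k) (lt_add_one _) hp0)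
  have hsum_g : ∀ n : ℕ, ∑ k ∈ Finset.range n, g k = (n:ℝ)^p := by
    intro n
    have := Finset.sum_range_sub (fun k : ℕ => ((k:ℝ))^p) n
    simp only [hg]
    rw [show (fun k : ℕ => ((k:ℝ)+1)^p - (k:ℝ)^p) = fun k : ℕ => (((k+1:ℕ)):ℝ)^p - ((k:ℕ):ℝ)^p
      by funext k; push_cast; ring_nf]
    rw [this]
    simp [Real.zero_rpow hp0.ne']
  have ratio : Tendsto (fun k => a k / g k) atTop (𝓝 (2/p)) := by
    have hd := (limA (s := s) hcc).div (limB hs2) (by linarith)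
    apply hd.congr'
    filter_upwards [eventually_ge_atTop 1] with k hk
    have ht : (0:ℝ) < (k:ℝ) := by exact_mod_cast hk
    have hx : ((k:ℝ))^(p-1) ≠ 0 := (Real.rpow_pos_of_pos ht _).ne'
    have hgk : g k ≠ 0 := (hgpos k).ne'
    simp only [Pi.div_apply]
    rw [div_div_div_cancel_right₀ hx]
  have hlo : (fun k => a k - (2/p) * g k) =o[atTop] g := by
    rw [Asymptotics.isLittleO_iff_tendsto' (by filter_upwards with k hk; exact absurd hk (hgpos k).ne')]
    have : Tendsto (fun k => a k / g k - 2/p) atTop (𝓝 (2/p - 2/p)) := ratio.sub tendsto_const_nhds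
    rw [sub_self] at this
    apply this.congr
    intro k
    rw [sub_div]
    congr 1
    rw [mul_div_assoc, div_self (hgpos k).ne', mul_one]
  have hsumlo := hlo.sum_range (fun k => (hgpos k).le)
    (by
      apply Tendsto.congr (fun n => (hsum_g n).symm)
      exact (tendsto_rpow_atTop hp0).comp tendsto_natCast_atTop_atTop)
  have hsumlo2 : (fun n : ℕ => (∑ k ∈ Finset.range n, a k) - (2/p) * (n:ℝ)^p)
      =o[atTop] (fun n : ℕ => (n:ℝ)^p) := by
    have e1 : ∀ n : ℕ, ∑ k ∈ Finset.range n, (a k - (2/p) * g k)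
        = (∑ k ∈ Finset.range n, a k) - (2/p) * (n:ℝ)^p := by
      intro n
      rw [Finset.sum_sub_distrib, ← Finset.mul_sum, hsum_g]
    calc (fun n : ℕ => (∑ k ∈ Finset.range n, a k) - (2/p) * (n:ℝ)^p)
        = fun n : ℕ => ∑ k ∈ Finset.range n, (a k - (2/p) * g k) := by funext n; rw [e1]
      _ =o[atTop] fun n : ℕ => ∑ k ∈ Finset.range n, g k := hsumlo
      _ = fun n : ℕ => (n:ℝ)^p := by funext n; rw [hsum_g]
  have htend : Tendsto (fun n : ℕ => ((∑ k ∈ Finset.range n, a k) - (2/p) * (n:ℝ)^p) / (n:ℝ)^p)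
      atTop (𝓝 0) := by
    rw [← Asymptotics.isLittleO_iff_tendsto']
    exact hsumlo2
    filter_upwards [eventually_ge_atTop 1] with n hn hcon
    exact absurd hcon (Real.rpow_pos_of_pos (by exact_mod_cast hn) _).ne'
  have := htend.add (tendsto_const_nhds (x := 2/p))
  rw [zero_add] at this
  apply this.congr'
  filter_upwards [eventually_ge_atTop 1] with n hn
  have ht : (0:ℝ) < (n:ℝ) := by exact_mod_cast hn
  have hx : ((n:ℝ))^p ≠ 0 := (Real.rpow_pos_of_pos ht _).ne'
  field_simp
  ring

end part4

theorem stmt_19 (α r : ℝ) (hr : 0 < r) (hα : 0 < α) (hrα : r * α < 2) :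
    Tendsto
      (fun n : ℕ =>
        (2 * ∫ x in (1/2 : ℝ)..1, ((min (mbar α x) n : ℕ) : ℝ) ^ 2 * rho r x) /
          (((2 : ℝ) ^ (r + 1) / (2 - r * α)) * (n : ℝ) ^ ((2 : ℝ) - r * α)))
      atTop (𝓝 1) := by
  set s := r * α with hs
  have hs0 : 0 < s := mul_pos hr hα
  have hp0 : (0:ℝ) < 2 - s := by linarith
  set cc := (2:ℝ)^(1/α) with hcc'
  have hcc : 0 < cc := hc
  have hsum := sum_tendsto (cc := cc) hs0 hrα hcc
  have h2 := hsum.mul_const ((2 - s)/2)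
  have hone : (2/(2-s)) * ((2-s)/2) = 1 := by field_simp
  rw [hone] at h2
  apply h2.congr'
  filter_upwards [eventually_ge_atTop 1] with n hn
  rw [integral_formula hα hr n]
  have ht : (0:ℝ) < (n:ℝ) := by exact_mod_cast hn
  have hnp : (0:ℝ) < (n:ℝ)^((2:ℝ) - s) := Real.rpow_pos_of_pos ht _
  have h22 : (2:ℝ)^(2:ℝ) = 4 := by
    rw [show ((2:ℝ):ℝ) = ((2:ℕ):ℝ) by norm_num, Real.rpow_natCast]
    norm_num
  have h4 : (2:ℝ)^(r+1) = (2:ℝ)^(r-1) * 4 := by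
    rw [show r+1 = (r-1) + 2 by ring, Real.rpow_add two_pos, h22]
  have hr1 : (0:ℝ) < (2:ℝ)^(r-1) := Real.rpow_pos_of_pos two_pos _
  rw [h4]
  field_simp
  ring
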